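/- Let C be a triangulated category with a weight structure w, m ≤ n integers, and g : M → N a morphism. Then g kills weights m,...,n if and only if there exists a commutative square with rows coming from weight decompositions: M → w_{≥n+1}M, N → w_{≥m}N, and a morphism j : w_{≥n+1}M → w_{≥m}N such that j composed with M → w_{≥n+1}M equals (N → w_{≥m}N) composed with g. -/

import Mathlib

open CategoryTheory CategoryTheory.Limits CategoryTheory.Pretriangulated Opposite

universe v u

variable (C : Type u) [Category.{v} C] [Preadditive C] [HasZeroObject C]
  [HasShift C ℤ] [∀ n : ℤ, (shiftFunctor C n).Additive] [Pretriangulated C]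

/-- A weight structure on the triangulated category `C`. -/
structure WeightStructure where
  /-- the class `C_{w ≤ n}` -/
  le : ℤ → Set C
  /-- the class `C_{w ≥ n}` -/
  ge : ℤ → Set C
  le_iso_closed : ∀ (n : ℤ) (X Y : C), (X ≅ Y) → X ∈ le n → Y ∈ le n
  ge_iso_closed : ∀ (n : ℤ) (X Y : C), (X ≅ Y) → X ∈ ge n → Y ∈ ge n
  le_retract : ∀ (n : ℤ) (X Y : C) (a : X ⟶ Y) (b : Y ⟶ X),
    a ≫ b = 𝟙 X → Y ∈ le n → X ∈ le n
  ge_retract : ∀ (n : ℤ) (X Y : C) (a : X ⟶ Y) (b : Y ⟶ X),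
    a ≫ b = 𝟙 X → Y ∈ ge n → X ∈ ge n
  le_shift : ∀ (n k : ℤ) (X : C), X ∈ le n → X⟦k⟧ ∈ le (n + k)
  ge_shift : ∀ (n k : ℤ) (X : C), X ∈ ge n → X⟦k⟧ ∈ ge (n + k)
  le_mono : ∀ n : ℤ, le n ⊆ le (n + 1)
  ge_anti : ∀ n : ℤ, ge (n + 1) ⊆ ge n
  orth : ∀ (n : ℤ) (X Y : C), X ∈ le n → Y ∈ ge (n + 1) → ∀ f : X ⟶ Y, f = 0
  decomp : ∀ (X : C) (k : ℤ), ∃ (A B : C) (x : A ⟶ X) (y : X ⟶ B) (δ : B ⟶ A⟦(1 : ℤ)⟧),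
    (Triangle.mk x y δ ∈ distTriang C) ∧ A ∈ le k ∧ B ∈ ge (k + 1)

variable {C}

/-- `(A, B, x, y)` is a `k`-weight decomposition of `X`. -/
def WeightStructure.IsWeightDecomp (w : WeightStructure C) (k : ℤ) {X : C} (A B : C)
    (x : A ⟶ X) (y : X ⟶ B) : Prop :=
  (∃ δ : B ⟶ A⟦(1 : ℤ)⟧, Triangle.mk x y δ ∈ distTriang C) ∧ A ∈ w.le k ∧ B ∈ w.ge (k + 1)

/-- `g : M ⟶ N` kills weights `m, …, n`. -/
def WeightStructure.KillsWeights (w : WeightStructure C) (m n : ℤ) {M N : C}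
    (g : M ⟶ N) : Prop :=
  ∃ (A A' B B' : C) (x : A ⟶ M) (x' : M ⟶ A') (y' : B ⟶ N) (y : N ⟶ B'),
    w.IsWeightDecomp n A A' x x' ∧ w.IsWeightDecomp (m - 1) B B' y' y ∧
      x ≫ g ≫ y = 0

/-- The class of objects of `C` without weights `m, …, n`. -/
def WeightStructure.without (w : WeightStructure C) (m n : ℤ) : Set C :=
  {M : C | w.KillsWeights m n (𝟙 M)}



/-- `g` kills weights `m, …, n` iff there is a commutative square between the
weight decompositions `M ⟶ w_{≥ n+1}M` and `N ⟶ w_{≥ m}N`. -/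
theorem stmt1 (w : WeightStructure C) (m n : ℤ) (hmn : m ≤ n) {M N : C}
    (g : M ⟶ N) :
    w.KillsWeights m n g ↔
      ∃ (A A' B B' : C) (x : A ⟶ M) (x' : M ⟶ A') (y' : B ⟶ N) (y : N ⟶ B')
        (j : A' ⟶ B'),
        w.IsWeightDecomp n A A' x x' ∧ w.IsWeightDecomp (m - 1) B B' y' y ∧
          x' ≫ j = g ≫ y := by
  constructor
  · rintro ⟨A, A', B, B', x, x', y', y, hA, hB, hz⟩
    obtain ⟨δ, hT⟩ := hA.1
    obtain ⟨j, hj⟩ := Triangle.yoneda_exact₂ _ hT (g ≫ y)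
      (by exact hz)
    exact ⟨A, A', B, B', x, x', y', y, j, hA, hB, hj.symm⟩
  · rintro ⟨A, A', B, B', x, x', y', y, j, hA, hB, hj⟩
    refine ⟨A, A', B, B', x, x', y', y, hA, hB, ?_⟩
    obtain ⟨δ, hT⟩ := hA.1
    have := comp_distTriang_mor_zero₁₂ _ hT
    change x ≫ x' = 0 at this
    rw [← hj, ← Category.assoc, this, zero_comp]
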